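/- Let g = X + X³ + 2X⁵ + 4X⁷ + 5X⁹ + 6X¹¹ + 7X¹³ ∈ ℚ[X]. There is no polynomial (or formal power series) s over ℚ of the form s = X + a₃X³ + a₅X⁵ with a₃, a₅ ∈ ℚ such that the composition g(−s(−X)) agrees with X modulo X¹²; any series t with zero constant term satisfying g(t(X)) ≡ X mod X¹² must have a nonzero coefficient in degree 11. -/

import Mathlib

open PowerSeries

/-- Composition `g ∘ t` of formal power series (intended for `t` with zero
constant coefficient). -/
noncomputable def PowerSeries.compose (g t : PowerSeries ℚ) : PowerSeries ℚ :=
  PowerSeries.mk fun n =>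
    PowerSeries.coeff n (Polynomial.aeval t (PowerSeries.trunc (n + 1) g))

noncomputable def gpoly : Polynomial ℚ := Polynomial.X + Polynomial.X ^ 3 + 2 * Polynomial.X ^ 5 +
  4 * Polynomial.X ^ 7 + 5 * Polynomial.X ^ 9 + 6 * Polynomial.X ^ 11 + 7 * Polynomial.X ^ 13

noncomputable def Fps : PowerSeries ℚ := X - X ^ 3 + X ^ 5 - 19 * X ^ 11

set_option maxHeartbeats 2000000 in
noncomputable def Rps : PowerSeries ℚ :=
  -112 * X - 8 * X ^ 3 + 140 * X ^ 5 - 305 * X ^ 7 + 1520 * X ^ 9 - 11531 * X ^ 11 + 57145 * X ^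
  13 - 147188 * X ^ 15 + 414211 * X ^ 17 - 1306803 * X ^ 19 + 4014677 * X ^ 21 - 10598647 * X ^
  23 + 24401975 * X ^ 25 - 60812081 * X ^ 27 + 157178298 * X ^ 29 - 385129937 * X ^ 31 +
  850505217 * X ^ 33 - 1797136113 * X ^ 35 + 4042523922 * X ^ 37 - 9139363487 * X ^ 39 +
  19472009180 * X ^ 41 - 38419886256 * X ^ 43 + 75297033388 * X ^ 45 - 155455910928 * X ^ 47 +
  316013670845 * X ^ 49 - 603242395037 * X ^ 51 + 1086322435311 * X ^ 53 - 1991867030492 * X ^ 55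
  + 3816639535817 * X ^ 57 - 7057050537652 * X ^ 59 + 12209068888425 * X ^ 61 - 20267528203566 *
  X ^ 63 + 35086906000952 * X ^ 65 - 62792179889641 * X ^ 67 + 105694375080118 * X ^ 69 -
  166141942485334 * X ^ 71 + 256145325111153 * X ^ 73 - 423397628662995 * X ^ 75 +
  707589270763006 * X ^ 77 - 1072972805586951 * X ^ 79 + 1529676932687832 * X ^ 81 -
  2214542353529748 * X ^ 83 + 3544316660497569 * X ^ 85 - 5461181322572549 * X ^ 87 +
  7265717733703737 * X ^ 89 - 9413996144600212 * X ^ 91 + 13090391387344183 * X ^ 93 -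
  20538430163724748 * X ^ 95 + 28029417689420785 * X ^ 97 - 31046360844460984 * X ^ 99 +
  37863580032681425 * X ^ 101 - 52569052845176890 * X ^ 103 + 80106575598241192 * X ^ 105 -
  87535814464207109 * X ^ 107 + 72947426335316298 * X ^ 109 - 100426865302780380 * X ^ 111 +
  139481757364972750 * X ^ 113 - 190811044075282722 * X ^ 115 + 127207362716855148 * X ^ 117 -
  63603681358427574 * X ^ 119 + 201411657635020651 * X ^ 121 - 201411657635020651 * X ^ 123 +
  201411657635020651 * X ^ 125 - 294370884235799413 * X ^ 131

set_option maxHeartbeats 4000000 in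
lemma hQ : Fps + Fps ^ 3 + 2 * Fps ^ 5 + 4 * Fps ^ 7 + 5 * Fps ^ 9 + 6 * Fps ^ 11 +
    7 * Fps ^ 13 = X + X ^ 12 * Rps := by
  unfold Fps Rps; ring

lemma compose_coeff (g : Polynomial ℚ) (t : PowerSeries ℚ) (ht : constantCoeff t = 0)
    (n : ℕ) : coeff n (PowerSeries.compose (g : PowerSeries ℚ) t)
      = coeff n (Polynomial.aeval t g) := by
  have hdvd : (Polynomial.X : Polynomial ℚ) ^ (n + 1) ∣
      (g - PowerSeries.trunc (n + 1) (g : PowerSeries ℚ)) := by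
    rw [Polynomial.X_pow_dvd_iff]
    intro d hd
    rw [Polynomial.coeff_sub, PowerSeries.coeff_trunc, if_pos hd, Polynomial.coeff_coe, sub_self]
  obtain ⟨q, hq⟩ := hdvd
  have hXt : (X : PowerSeries ℚ) ∣ t := PowerSeries.X_dvd_iff.mpr ht
  have h0 : coeff n
      (Polynomial.aeval t (g - PowerSeries.trunc (n + 1) (g : PowerSeries ℚ))) = 0 := by
    rw [hq, map_mul, map_pow, Polynomial.aeval_X]
    have hd : (X : PowerSeries ℚ) ^ (n + 1) ∣ t ^ (n + 1) * Polynomial.aeval t q :=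
      dvd_mul_of_dvd_left (pow_dvd_pow_of_dvd hXt _) _
    exact PowerSeries.X_pow_dvd_iff.mp hd n (Nat.lt_succ_self n)
  have h2 : Polynomial.aeval t g
      = Polynomial.aeval t (PowerSeries.trunc (n + 1) (g : PowerSeries ℚ))
        + Polynomial.aeval t (g - PowerSeries.trunc (n + 1) (g : PowerSeries ℚ)) := by
    rw [← map_add]; ring_nf
  rw [PowerSeries.compose, PowerSeries.coeff_mk, h2, map_add, h0, add_zero]

lemma aeval_coe (p u : Polynomial ℚ) :
    Polynomial.aeval ((u : PowerSeries ℚ)) p = ((p.comp u : Polynomial ℚ) : PowerSeries ℚ) := by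
  have hcoe : ∀ v : Polynomial ℚ, (v : PowerSeries ℚ) = Polynomial.coeToPowerSeries.algHom ℚ v := by
    intro v
    simp [Polynomial.coeToPowerSeries.algHom_apply]
  rw [Polynomial.comp_eq_aeval, hcoe u, Polynomial.aeval_algHom_apply, ← hcoe]

lemma cc_geom (a b : PowerSeries ℚ) (ha : constantCoeff a = 0) (hb : constantCoeff b = 0)
    (k : ℕ) (hk : 2 ≤ k) :
    constantCoeff (∑ i ∈ Finset.range k, a ^ i * b ^ (k - 1 - i)) = 0 := by
  rw [map_sum]
  apply Finset.sum_eq_zero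
  intro i hi
  rw [map_mul, map_pow, map_pow, ha, hb]
  rcases Nat.eq_zero_or_pos i with h | h
  · subst h
    rw [pow_zero, one_mul, zero_pow (by omega : k - 1 - 0 ≠ 0)]
  · rw [zero_pow h.ne', zero_mul]

lemma key (t : PowerSeries ℚ) (ht0 : constantCoeff t = 0)
    (h : ∀ n < 12, coeff n (PowerSeries.compose ((gpoly : Polynomial ℚ) : PowerSeries ℚ) t)
      = coeff n (X : PowerSeries ℚ)) :
    coeff 11 t = -19 := by
  have hFcc : constantCoeff Fps = 0 := by
    have h19 : (19 : PowerSeries ℚ) = (C 19 : PowerSeries ℚ) := (map_ofNat (C (R := ℚ)) 19).symm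
    rw [Fps, h19]
    simp
  have hF11 : coeff 11 Fps = -19 := by
    have h19 : (19 : PowerSeries ℚ) = (C 19 : PowerSeries ℚ) := (map_ofNat (C (R := ℚ)) 19).symm
    rw [Fps, h19]
    simp [PowerSeries.coeff_X_pow, PowerSeries.coeff_X, PowerSeries.coeff_C_mul]
  have haevalt : Polynomial.aeval t gpoly
      = t + t ^ 3 + 2 * t ^ 5 + 4 * t ^ 7 + 5 * t ^ 9 + 6 * t ^ 11 + 7 * t ^ 13 := by
    simp [gpoly, map_ofNat]
  have haevalF : Polynomial.aeval Fps gpoly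
      = Fps + Fps ^ 3 + 2 * Fps ^ 5 + 4 * Fps ^ 7 + 5 * Fps ^ 9 + 6 * Fps ^ 11 +
        7 * Fps ^ 13 := by
    simp [gpoly, map_ofNat]
  have h1 : (X : PowerSeries ℚ) ^ 12 ∣ Polynomial.aeval t gpoly - X := by
    rw [PowerSeries.X_pow_dvd_iff]
    intro m hm
    rw [map_sub, ← compose_coeff gpoly t ht0 m, h m hm, sub_self]
  have h2 : (X : PowerSeries ℚ) ^ 12 ∣ Polynomial.aeval Fps gpoly - X := by
    rw [haevalF, hQ, add_sub_cancel_left]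
    exact dvd_mul_right _ _
  have h3 : (X : PowerSeries ℚ) ^ 12 ∣ Polynomial.aeval t gpoly - Polynomial.aeval Fps gpoly := by
    have hd := dvd_sub h1 h2
    simpa using hd
  set S3 := ∑ i ∈ Finset.range 3, t ^ i * Fps ^ (3 - 1 - i) with hS3
  set S5 := ∑ i ∈ Finset.range 5, t ^ i * Fps ^ (5 - 1 - i) with hS5
  set S7 := ∑ i ∈ Finset.range 7, t ^ i * Fps ^ (7 - 1 - i) with hS7
  set S9 := ∑ i ∈ Finset.range 9, t ^ i * Fps ^ (9 - 1 - i) with hS9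
  set S11 := ∑ i ∈ Finset.range 11, t ^ i * Fps ^ (11 - 1 - i) with hS11
  set S13 := ∑ i ∈ Finset.range 13, t ^ i * Fps ^ (13 - 1 - i) with hS13
  set H : PowerSeries ℚ := 1 + S3 + 2 * S5 + 4 * S7 + 5 * S9 + 6 * S11 + 7 * S13 with hH
  have hfact : Polynomial.aeval t gpoly - Polynomial.aeval Fps gpoly = (t - Fps) * H := by
    rw [haevalt, haevalF, hH, hS3, hS5, hS7, hS9, hS11, hS13]
    linear_combination (-1 : ℚ⟦X⟧) * (geom_sum₂_mul t Fps 3) - 2 * (geom_sum₂_mul t Fps 5)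
      - 4 * (geom_sum₂_mul t Fps 7) - 5 * (geom_sum₂_mul t Fps 9)
      - 6 * (geom_sum₂_mul t Fps 11) - 7 * (geom_sum₂_mul t Fps 13)
  have hHunit : IsUnit H := by
    rw [PowerSeries.isUnit_iff_constantCoeff, hH]
    have c3 := cc_geom t Fps ht0 hFcc 3 (by norm_num)
    have c5 := cc_geom t Fps ht0 hFcc 5 (by norm_num)
    have c7 := cc_geom t Fps ht0 hFcc 7 (by norm_num)
    have c9 := cc_geom t Fps ht0 hFcc 9 (by norm_num)
    have c11 := cc_geom t Fps ht0 hFcc 11 (by norm_num)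
    have c13 := cc_geom t Fps ht0 hFcc 13 (by norm_num)
    rw [← hS3] at c3; rw [← hS5] at c5; rw [← hS7] at c7; rw [← hS9] at c9
    rw [← hS11] at c11; rw [← hS13] at c13
    rw [map_add, map_add, map_add, map_add, map_add, map_add, map_mul, map_mul, map_mul,
      map_mul, map_mul, map_one, c3, c5, c7, c9, c11, c13]
    norm_num
  have h4 : (X : PowerSeries ℚ) ^ 12 ∣ (t - Fps) := by
    rw [hfact] at h3
    exact (hHunit.dvd_mul_right).mp h3
  have h5 : coeff 11 (t - Fps) = 0 := PowerSeries.X_pow_dvd_iff.mp h4 11 (by norm_num)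
  rw [map_sub, hF11] at h5
  linarith

theorem stmt9 :
    let g : Polynomial ℚ := Polynomial.X + Polynomial.X ^ 3 + 2 * Polynomial.X ^ 5 +
      4 * Polynomial.X ^ 7 + 5 * Polynomial.X ^ 9 + 6 * Polynomial.X ^ 11 +
      7 * Polynomial.X ^ 13
    (¬ ∃ a3 a5 : ℚ,
      let s : Polynomial ℚ := Polynomial.X + Polynomial.C a3 * Polynomial.X ^ 3 +
        Polynomial.C a5 * Polynomial.X ^ 5
      ∀ n < 12, (g.comp (-(s.comp (-Polynomial.X)))).coeff n = (Polynomial.X : Polynomial ℚ).coeff n) ∧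
    (∀ t : PowerSeries ℚ, constantCoeff t = 0 →
      (∀ n < 12, coeff n (PowerSeries.compose (g : PowerSeries ℚ) t) = coeff n (X : PowerSeries ℚ)) →
      coeff 11 t ≠ 0) := by
  intro g
  constructor
  · rintro ⟨a3, a5, hs⟩
    set u : Polynomial ℚ := Polynomial.X + Polynomial.C a3 * Polynomial.X ^ 3 +
      Polynomial.C a5 * Polynomial.X ^ 5 with hu
    have hs2 : ∀ n < 12, (g.comp (-(u.comp (-Polynomial.X)))).coeff n
        = (Polynomial.X : Polynomial ℚ).coeff n := hs
    have hcomp : -(u.comp (-Polynomial.X)) = u := by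
      rw [hu]
      simp only [Polynomial.add_comp, Polynomial.mul_comp, Polynomial.pow_comp,
        Polynomial.X_comp, Polynomial.C_comp]
      ring
    rw [hcomp] at hs2
    have hucc : constantCoeff ((u : Polynomial ℚ) : PowerSeries ℚ) = 0 := by
      rw [← PowerSeries.coeff_zero_eq_constantCoeff_apply, Polynomial.coeff_coe]
      simp [hu]
    have hkey := key ((u : Polynomial ℚ) : PowerSeries ℚ) hucc ?_
    · have : coeff 11 ((u : Polynomial ℚ) : PowerSeries ℚ) = 0 := by
        rw [Polynomial.coeff_coe]
        simp [hu, Polynomial.coeff_X_pow, Polynomial.coeff_X]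
      rw [this] at hkey
      norm_num at hkey
    · intro n hn
      rw [compose_coeff gpoly _ hucc n, aeval_coe, Polynomial.coeff_coe]
      have hg : g = gpoly := rfl
      rw [← hg, hs2 n hn, ← Polynomial.coe_X, Polynomial.coeff_coe]
  · intro t ht0 hco
    have hg : (g : PowerSeries ℚ) = ((gpoly : Polynomial ℚ) : PowerSeries ℚ) := rfl
    rw [hg] at hco
    have := key t ht0 hco
    rw [this]
    norm_num
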